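/- arXiv:2502.12284 — 3 statements merged into one kernel-verified Lean document; each statement's English description precedes it below -/
import Mathlib

section
/- For any density matrix ρ on a finite-dimensional Hilbert space and any permutation π of {1,...,k} with |π| cycles, the trace of the permutation operator R_π applied to ρ^⊗k satisfies tr(R_π ρ^⊗k) ≤ ‖ρ‖^(k−|π|), where R_π permutes the k tensor factors. -/
open Matrix BigOperators
open scoped ComplexOrder

open Classical in
/-- Largest eigenvalue (operator norm for PSD matrices) of a Hermitian matrix. -/
noncomputable def maxEig {n : Type*} [Fintype n] [DecidableEq n]
    (ρ : Matrix n n ℂ) : ℝ :=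
  if h : ρ.IsHermitian then ⨆ i, h.eigenvalues i else 0

/-- The k-fold tensor (Kronecker) power of a matrix, acting on (ℂ^d)^⊗k. -/
noncomputable def tensPow {d k : ℕ} (ρ : Matrix (Fin d) (Fin d) ℂ) :
    Matrix (Fin k → Fin d) (Fin k → Fin d) ℂ :=
  Matrix.of fun v w => ∏ i, ρ (v i) (w i)

/-- The permutation operator R_π on (ℂ^d)^⊗k : R_π (v_1 ⊗ ⋯ ⊗ v_k) =
v_{π⁻¹(1)} ⊗ ⋯ ⊗ v_{π⁻¹(k)}. -/
noncomputable def permOp (d : ℕ) {k : ℕ} (π : Equiv.Perm (Fin k)) :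
    Matrix (Fin k → Fin d) (Fin k → Fin d) ℂ :=
  Matrix.of fun v w => if ∀ i, v i = w (π⁻¹ i) then 1 else 0

/-- Number of cycles of a permutation, counting fixed points as cycles of length 1. -/
def cycleCount {k : ℕ} (π : Equiv.Perm (Fin k)) : ℕ :=
  π.cycleFactorsFinset.card + (Finset.univ.filter fun x => π x = x).card

lemma tensPow_mul {d k : ℕ} (A B : Matrix (Fin d) (Fin d) ℂ) :
    (tensPow (k := k) (A * B)) = tensPow A * tensPow B := by
  ext v w
  simp only [tensPow, Matrix.of_apply, Matrix.mul_apply]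
  rw [Finset.prod_univ_sum]
  rw [Fintype.piFinset_univ]
  exact Finset.sum_congr rfl fun x _ => by rw [Finset.prod_mul_distrib]

lemma tensPow_one {d k : ℕ} : (tensPow (k := k) (1 : Matrix (Fin d) (Fin d) ℂ)) = 1 := by
  ext v w
  simp only [tensPow, Matrix.of_apply, Matrix.one_apply]
  by_cases h : v = w
  · subst h; simp
  · rw [if_neg h]
    obtain ⟨i, hi⟩ := Function.ne_iff.mp h
    exact Finset.prod_eq_zero (Finset.mem_univ i) (by simp [Matrix.one_apply, hi])

lemma permOp_mul {d k : ℕ} (π : Equiv.Perm (Fin k)) (A : Matrix (Fin d) (Fin d) ℂ)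
    (v w : Fin k → Fin d) :
    (permOp d π * tensPow A : Matrix (Fin k → Fin d) (Fin k → Fin d) ℂ) v w = ∏ i, A (v (π i)) (w i) := by
  have key : ∀ x : Fin k → Fin d,
      (∀ i, v i = x (π⁻¹ i)) ↔ x = fun j => v (π j) := by
    intro x
    constructor
    · intro h; funext j; rw [h (π j)]; simp
    · intro h; subst h; intro i; simp
  simp only [Matrix.mul_apply, permOp, Matrix.of_apply, key, tensPow]
  simp only [ite_mul, one_mul, zero_mul]
  rw [Finset.sum_ite_eq' Finset.univ (fun j => v (π j)) (fun x => ∏ i, A (x i) (w i))]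
  simp

lemma permOp_comm {d k : ℕ} (π : Equiv.Perm (Fin k)) (U : Matrix (Fin d) (Fin d) ℂ) :
    permOp d π * tensPow U = tensPow U * permOp d π := by
  ext v w
  rw [permOp_mul]
  have key : ∀ x : Fin k → Fin d,
      (∀ i, x i = w (π⁻¹ i)) ↔ x = fun j => w (π⁻¹ j) := fun x => funext_iff.symm
  simp only [Matrix.mul_apply, permOp, Matrix.of_apply, key, tensPow, mul_ite, mul_one, mul_zero]
  rw [Finset.sum_ite_eq' Finset.univ (fun j => w (π⁻¹ j)) (fun x => ∏ i, U (v i) (x i))]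
  simp only [Finset.mem_univ, if_true]
  rw [← Equiv.prod_comp π (fun i => U (v i) (w (π⁻¹ i)))]
  exact Finset.prod_congr rfl fun i _ => by simp

lemma trace_permOp_mul {d k : ℕ} (π : Equiv.Perm (Fin k)) (A : Matrix (Fin d) (Fin d) ℂ) :
    (permOp d π * tensPow A).trace = ∑ v : Fin k → Fin d, ∏ i, A (v (π i)) (v i) := by
  simp only [Matrix.trace, Matrix.diag]
  exact Finset.sum_congr rfl fun v _ => permOp_mul π A v v

lemma trace_conj {d k : ℕ} (π : Equiv.Perm (Fin k)) (U D : Matrix (Fin d) (Fin d) ℂ)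
    (hU : star U * U = 1) :
    (permOp d π * tensPow (U * D * star U)).trace = (permOp d π * tensPow D).trace := by
  rw [tensPow_mul, tensPow_mul, ← mul_assoc, ← mul_assoc, permOp_comm, mul_assoc, mul_assoc,
    Matrix.trace_mul_comm, mul_assoc, mul_assoc,
    show tensPow (k := k) (star U) * tensPow U = (1 : Matrix (Fin k → Fin d) (Fin k → Fin d) ℂ)
      from by rw [← tensPow_mul, hU, tensPow_one], mul_one]

lemma trace_diag {d k : ℕ} (π : Equiv.Perm (Fin k)) (lam : Fin d → ℝ) :
    (permOp d π * tensPow (Matrix.diagonal (fun i => (lam i : ℂ)))).trace =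
      ((∑ v ∈ Finset.univ.filter (fun v : Fin k → Fin d => ∀ i, v (π i) = v i),
        ∏ i, lam (v i) : ℝ) : ℂ) := by
  rw [trace_permOp_mul]
  have key : ∀ v : Fin k → Fin d,
      (∏ i, (Matrix.diagonal fun j => (lam j : ℂ)) (v (π i)) (v i)) =
        if (∀ i, v (π i) = v i) then ((∏ i, lam (v i) : ℝ) : ℂ) else 0 := by
    intro v
    by_cases h : ∀ i, v (π i) = v i
    · rw [if_pos h]
      push_cast
      refine Finset.prod_congr rfl fun i _ => ?_
      rw [Matrix.diagonal_apply, if_pos (h i), h i]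
    · rw [if_neg h]
      push_neg at h
      obtain ⟨i, hi⟩ := h
      exact Finset.prod_eq_zero (Finset.mem_univ i) (by rw [Matrix.diagonal_apply, if_neg hi])
  rw [Finset.sum_congr rfl fun v _ => key v, ← Finset.sum_filter]
  push_cast
  rfl

section Comb

variable {k : ℕ} (π : Equiv.Perm (Fin k))

local notation "sc" => Equiv.Perm.SameCycle.setoid π

noncomputable instance : Fintype (Quotient (Equiv.Perm.SameCycle.setoid π)) := by
  classical exact Quotient.fintype _

/-- The classifying map: fixed points to themselves, moved points to their cycle. -/
noncomputable def classF : Fin k → (Fin k) ⊕ (Equiv.Perm (Fin k)) := fun x =>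
  if π x = x then Sum.inl x else Sum.inr (π.cycleOf x)

lemma sameCycle_fixed {x y : Fin k} (hx : π x = x) (h : π.SameCycle x y) : y = x := by
  obtain ⟨n, hn⟩ := h
  rw [Equiv.Perm.zpow_apply_eq_self_of_apply_eq_self hx n] at hn
  exact hn.symm

lemma classF_congr {x y : Fin k} (h : π.SameCycle x y) : classF π x = classF π y := by
  by_cases hx : π x = x
  · rw [sameCycle_fixed π hx h]
  · have hy : ¬ π y = y := by
      intro hy
      apply hx
      have hxy := sameCycle_fixed π hy h.symm
      rw [hxy]; exact hy
    simp only [classF, if_neg hx, if_neg hy]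
    exact congrArg _ h.cycleOf_eq

lemma classF_inj {x y : Fin k} (h : classF π x = classF π y) : π.SameCycle x y := by
  by_cases hx : π x = x <;> by_cases hy : π y = y <;>
    simp only [classF, if_pos, if_neg, hx, hy, if_true, if_false] at h
  · cases h; exact Equiv.Perm.SameCycle.refl _ _
  · simp at h
  · simp at h
  · simp only [Sum.inr.injEq] at h
    have : y ∈ (π.cycleOf y).support :=
      Equiv.Perm.mem_support_cycleOf_iff.mpr
        ⟨Equiv.Perm.SameCycle.refl _ _, Equiv.Perm.mem_support.mpr hy⟩
    rw [← h] at this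
    exact (Equiv.Perm.mem_support_cycleOf_iff.mp this).1

lemma card_classes : Fintype.card (Quotient (Equiv.Perm.SameCycle.setoid π)) = cycleCount π := by
  classical
  have hsurj : Function.Surjective (Quotient.mk (Equiv.Perm.SameCycle.setoid π)) :=
    Quotient.mk_surjective
  -- card of quotient = card of image of classF
  have h1 : Fintype.card (Quotient (Equiv.Perm.SameCycle.setoid π)) =
      (Finset.univ.image (classF π)).card := by
    rw [← Finset.card_univ]
    have : Finset.univ.image (classF π) =
        Finset.univ.image (fun q : Quotient (Equiv.Perm.SameCycle.setoid π) =>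
          Quotient.liftOn q (classF π) (fun a b h => classF_congr π h)) := by
      ext z
      simp only [Finset.mem_image, Finset.mem_univ, true_and]
      constructor
      · rintro ⟨x, rfl⟩; exact ⟨Quotient.mk _ x, rfl⟩
      · rintro ⟨q, rfl⟩
        obtain ⟨x, rfl⟩ := hsurj q
        exact ⟨x, rfl⟩
    rw [this]
    rw [Finset.card_image_of_injective]
    intro q1 q2 h
    obtain ⟨x, rfl⟩ := hsurj q1
    obtain ⟨y, rfl⟩ := hsurj q2
    exact Quotient.sound (classF_inj π h)
  rw [h1]
  -- split univ into fixed and moved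
  have hsplit : (Finset.univ : Finset (Fin k)) =
      (Finset.univ.filter fun x => π x = x) ∪ π.support := by
    ext x
    simp [Equiv.Perm.mem_support, em]
  have himgfix : Finset.image (classF π) (Finset.univ.filter fun x => π x = x) =
      Finset.image Sum.inl (Finset.univ.filter fun x => π x = x) := by
    refine Finset.image_congr ?_
    intro x hx
    simp only [Finset.mem_coe, Finset.mem_filter] at hx
    simp [classF, hx.2]
  have himgsup : Finset.image (classF π) π.support =
      Finset.image Sum.inr π.cycleFactorsFinset := by
    have h2 : Finset.image (classF π) π.support =
        Finset.image Sum.inr (Finset.image π.cycleOf π.support) := by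
      rw [Finset.image_image]
      refine Finset.image_congr ?_
      intro x hx
      simp only [Finset.mem_coe, Equiv.Perm.mem_support] at hx
      simp [classF, hx]
    rw [h2]
    congr 1
    ext c
    simp only [Finset.mem_image, Equiv.Perm.mem_support]
    constructor
    · rintro ⟨x, hx, rfl⟩
      exact Equiv.Perm.cycleOf_mem_cycleFactorsFinset_iff.mpr (Equiv.Perm.mem_support.mpr hx)
    · intro hc
      have hcyc := (Equiv.Perm.mem_cycleFactorsFinset_iff.mp hc).1
      obtain ⟨a, ha⟩ := hcyc.nonempty_support
      refine ⟨a, ?_, (Equiv.Perm.cycle_is_cycleOf ha hc).symm⟩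
      have h3 := (Equiv.Perm.mem_cycleFactorsFinset_iff.mp hc).2 a ha
      rw [← h3]
      exact Equiv.Perm.mem_support.mp ha
  rw [hsplit, Finset.image_union, himgfix, himgsup, Finset.card_union_of_disjoint (by
    rw [Finset.disjoint_left]
    rintro z hz1 hz2
    obtain ⟨x, _, rfl⟩ := Finset.mem_image.mp hz1
    obtain ⟨c, _, hc⟩ := Finset.mem_image.mp hz2
    exact Sum.inl_ne_inr hc.symm),
    Finset.card_image_of_injective _ Sum.inl_injective,
    Finset.card_image_of_injective _ Sum.inr_injective, add_comm]
  rfl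

end Comb

lemma diag_sum_le {d k : ℕ} (π : Equiv.Perm (Fin k)) (lam : Fin d → ℝ) (M : ℝ)
    (h0 : ∀ i, 0 ≤ lam i) (hM : ∀ i, lam i ≤ M) (hsum : ∑ i, lam i = 1) :
    ∑ v ∈ Finset.univ.filter (fun v : Fin k → Fin d => ∀ i, v (π i) = v i),
      ∏ i, lam (v i) ≤ M ^ (k - cycleCount π) := by
  classical
  have hM0 : 0 ≤ M := by
    rcases isEmpty_or_nonempty (Fin d) with hd | hd
    · -- then the sum is over constants; k - cc exponent; M could be negative? but lam empty
      -- sum over i empty: hsum : 0 = 1, contradiction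
      simp at hsum
    · exact le_trans (h0 (Classical.arbitrary _)) (hM _)
  set Q := Quotient (Equiv.Perm.SameCycle.setoid π) with hQ
  -- constancy of admissible v on classes
  have hconst : ∀ v : Fin k → Fin d, (∀ i, v (π i) = v i) →
      ∀ a b : Fin k, (Equiv.Perm.SameCycle.setoid π).r a b → v a = v b := by
    intro v hv
    have hinv : ∀ a, v (π⁻¹ a) = v a := by
      intro a
      have := hv (π⁻¹ a)
      rw [show π (π⁻¹ a) = a from π.apply_symm_apply a] at this
      exact this.symm
    have hp : ∀ (n : ℕ) (a), v ((π ^ n) a) = v a := by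
      intro n
      induction n with
      | zero => simp
      | succ m ih =>
        intro a
        rw [pow_succ, Equiv.Perm.mul_apply, ih, hv]
    have hz : ∀ (n : ℤ) (a), v ((π ^ n) a) = v a := by
      intro n
      cases n with
      | ofNat m => exact_mod_cast hp m
      | negSucc m =>
        intro a
        rw [zpow_negSucc, ← inv_pow]
        have hpn : ∀ (n : ℕ) (a), v ((π⁻¹ ^ n) a) = v a := by
          intro n
          induction n with
          | zero => simp
          | succ m ih =>
            intro a
            rw [pow_succ, Equiv.Perm.mul_apply, ih, hinv]
        exact hpn (m + 1) a
    rintro a b ⟨n, rfl⟩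
    exact (hz n a).symm
  -- reindex the sum by functions on the quotient
  have hre : ∑ v ∈ Finset.univ.filter (fun v : Fin k → Fin d => ∀ i, v (π i) = v i),
      ∏ i, lam (v i) = ∑ f : Q → Fin d, ∏ i, lam (f (Quotient.mk (Equiv.Perm.SameCycle.setoid π) i)) := by
    refine Finset.sum_nbij' (fun v (q : Q) => v q.out) (fun f i => f (Quotient.mk (Equiv.Perm.SameCycle.setoid π) i))
      (fun v _ => Finset.mem_univ _) ?_ ?_ ?_ ?_
    · intro f _
      simp only [Finset.mem_filter, Finset.mem_univ, true_and]
      intro i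
      congr 1
      exact Quotient.sound ⟨-1, by simp⟩
    · intro v hv
      simp only [Finset.mem_filter, Finset.mem_univ, true_and] at hv
      funext i
      exact hconst v hv _ i (Quotient.mk_out i)
    · intro f _
      funext q
      exact congrArg f (Quotient.out_eq q)
    · intro v hv
      simp only [Finset.mem_filter, Finset.mem_univ, true_and] at hv
      refine Finset.prod_congr rfl fun i _ => ?_
      congr 1
      exact (hconst v hv _ i (Quotient.mk_out i)).symm
  rw [hre]
  -- group each product over classes
  set n : Q → ℕ := fun q => (Finset.univ.filter fun i : Fin k => Quotient.mk (Equiv.Perm.SameCycle.setoid π) i = q).card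
    with hn
  have hgroup : ∀ f : Q → Fin d, ∏ i, lam (f (Quotient.mk (Equiv.Perm.SameCycle.setoid π) i)) =
      ∏ q : Q, lam (f q) ^ n q := by
    intro f
    rw [← Finset.prod_fiberwise_of_maps_to (g := fun i : Fin k => Quotient.mk (Equiv.Perm.SameCycle.setoid π) i)
      (t := Finset.univ) (fun i _ => Finset.mem_univ _) (fun i => lam (f (Quotient.mk (Equiv.Perm.SameCycle.setoid π) i)))]
    refine Finset.prod_congr rfl fun q _ => ?_
    rw [Finset.prod_congr rfl (fun i hi => by
      rw [(Finset.mem_filter.mp hi).2] : ∀ i ∈ _, lam (f (Quotient.mk (Equiv.Perm.SameCycle.setoid π) i)) = lam (f q)),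
      Finset.prod_const]
  have hn1 : ∀ q : Q, 1 ≤ n q := by
    intro q
    refine Finset.card_pos.mpr ⟨q.out, ?_⟩
    simp [Quotient.out_eq]
  have hnsum : ∑ q : Q, n q = k := by
    rw [hn, ← Finset.card_eq_sum_card_fiberwise (fun i _ => Finset.mem_univ _)]
    simp
  have hQcard : Fintype.card Q = cycleCount π := card_classes π
  calc ∑ f : Q → Fin d, ∏ i, lam (f (Quotient.mk (Equiv.Perm.SameCycle.setoid π) i))
      = ∑ f : Q → Fin d, ∏ q : Q, lam (f q) ^ n q := by
        exact Finset.sum_congr rfl fun f _ => hgroup f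
    _ ≤ ∑ f : Q → Fin d, M ^ (k - cycleCount π) * ∏ q : Q, lam (f q) := by
        refine Finset.sum_le_sum fun f _ => ?_
        have step : ∀ q : Q, lam (f q) ^ n q ≤ M ^ (n q - 1) * lam (f q) := by
          intro q
          have : lam (f q) ^ n q = lam (f q) ^ (n q - 1) * lam (f q) := by
            rw [← pow_succ, Nat.sub_add_cancel (hn1 q)]
          rw [this]
          exact mul_le_mul_of_nonneg_right (pow_le_pow_left₀ (h0 _) (hM _) _) (h0 _)
        calc ∏ q : Q, lam (f q) ^ n q ≤ ∏ q : Q, (M ^ (n q - 1) * lam (f q)) :=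
              Finset.prod_le_prod (fun q _ => pow_nonneg (h0 _) _) (fun q _ => step q)
          _ = (∏ q : Q, M ^ (n q - 1)) * ∏ q : Q, lam (f q) := Finset.prod_mul_distrib
          _ = M ^ (∑ q : Q, (n q - 1)) * ∏ q : Q, lam (f q) := by
              rw [Finset.prod_pow_eq_pow_sum]
          _ = M ^ (k - cycleCount π) * ∏ q : Q, lam (f q) := by
              congr 2
              rw [Finset.sum_tsub_distrib Finset.univ (fun q _ => hn1 q), hnsum]
              simp [hQcard, Finset.card_univ]
    _ = M ^ (k - cycleCount π) * ∑ f : Q → Fin d, ∏ q : Q, lam (f q) := by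
        rw [Finset.mul_sum]
    _ = M ^ (k - cycleCount π) := by
        rw [show ∑ f : Q → Fin d, ∏ q : Q, lam (f q) = 1 from ?_, mul_one]
        rw [← Fintype.piFinset_univ, ← Finset.prod_univ_sum]
        simp [hsum]

/-- tr(R_π ρ^⊗k) ≤ ‖ρ‖^(k−|π|) for any density matrix ρ and
permutation π with |π| cycles (including fixed points). -/
theorem trace_permOp_tensPow_le {d k : ℕ} (ρ : Matrix (Fin d) (Fin d) ℂ)
    (hρ : ρ.PosSemidef) (htr : ρ.trace = 1) (π : Equiv.Perm (Fin k)) :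
    ((permOp d π * tensPow ρ).trace).re ≤ (maxEig ρ) ^ (k - cycleCount π) := by
  have hH : ρ.IsHermitian := hρ.1
  set lam : Fin d → ℝ := hH.eigenvalues with hlam
  set U : Matrix (Fin d) (Fin d) ℂ := (hH.eigenvectorUnitary : Matrix (Fin d) (Fin d) ℂ)
    with hUdef
  have hU : star U * U = 1 := Matrix.mem_unitaryGroup_iff'.mp hH.eigenvectorUnitary.2
  have hDmat : Matrix.diagonal (RCLike.ofReal ∘ lam) =
      Matrix.diagonal (fun i => (lam i : ℂ)) := rfl
  have h2 : (permOp d π * tensPow ρ).trace =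
      (permOp d π * tensPow (Matrix.diagonal (fun i => (lam i : ℂ)))).trace := by
    conv_lhs => rw [hH.spectral_theorem]
    rw [hDmat] at *
    exact trace_conj π U _ hU
  have htrD : ∑ i, lam i = 1 := by
    have h3 : ρ.trace = ∑ i, (lam i : ℂ) := by
      conv_lhs => rw [hH.spectral_theorem]
      rw [Unitary.conjStarAlgAut_apply, Matrix.trace_mul_cycle, hU, one_mul, hDmat, Matrix.trace_diagonal]
    rw [htr] at h3
    have := congrArg Complex.re h3
    simpa using this.symm
  have hmax : maxEig ρ = ⨆ i, lam i := by
    unfold maxEig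
    rw [dif_pos hH]
  have hd : Nonempty (Fin d) := by
    rcases isEmpty_or_nonempty (Fin d) with hd | hd
    · exfalso; simp at htrD
    · exact hd
  have hM : ∀ i, lam i ≤ maxEig ρ := by
    intro i
    rw [hmax]
    exact le_ciSup (Set.Finite.bddAbove (Set.finite_range _)) i
  rw [h2, trace_diag, Complex.ofReal_re]
  exact diag_sum_le π lam (maxEig ρ) (fun i => hρ.eigenvalues_nonneg i) hM htrD
end

section
/- Let ρ be a density matrix on a finite-dimensional Hilbert space with largest eigenvalue λ₁ = ‖ρ‖ > 1/2, and let ψ₁ be the (unique up to phase) unit eigenvector for λ₁. Then for every unit vector ψ, ‖ρ − |ψ⟩⟨ψ|‖₁ ≥ 2(1 − λ₁), with equality if and only if |ψ⟩⟨ψ| = |ψ₁⟩⟨ψ₁|. In particular, the closest rank-one projector to ρ in trace norm is the projector onto the top eigenvector, at distance 2(1−λ₁). -/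
open Matrix BigOperators
open scoped ComplexOrder

/-- Trace norm (Schatten 1-norm) of a square complex matrix. -/
noncomputable def traceNorm {n : Type*} [Fintype n] [DecidableEq n]
    (A : Matrix n n ℂ) : ℝ :=
  (((Matrix.posSemidef_conjTranspose_mul_self A).1.eigenvectorUnitary : Matrix n n ℂ) *
    diagonal (((↑) : ℝ → ℂ) ∘ (√·) ∘ (Matrix.posSemidef_conjTranspose_mul_self A).1.eigenvalues) *
    (star (Matrix.posSemidef_conjTranspose_mul_self A).1.eigenvectorUnitary :
      Matrix n n ℂ)).trace.re

/-- The rank-one projector |ψ⟩⟨ψ| associated to a vector ψ ∈ ℂ^d. -/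
noncomputable def proj {d : ℕ} (ψ : EuclideanSpace ℂ (Fin d)) :
    Matrix (Fin d) (Fin d) ℂ :=
  Matrix.of fun i j => ψ i * star (ψ j)

section auxiliary

open scoped MatrixOrder

variable {n : Type*} [Fintype n] [DecidableEq n]

lemma trace_conj_unitary (U : Matrix.unitaryGroup n ℂ) (D : Matrix n n ℂ) :
    ((U : Matrix n n ℂ) * D * star (U : Matrix n n ℂ)).trace = D.trace := by
  rw [Matrix.trace_mul_cycle, Unitary.star_mul_self_of_mem U.2, Matrix.one_mul]

lemma conj_mul_conj (U : Matrix.unitaryGroup n ℂ) (D E : Matrix n n ℂ) :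
    ((U : Matrix n n ℂ) * D * star (U : Matrix n n ℂ)) *
      ((U : Matrix n n ℂ) * E * star (U : Matrix n n ℂ))
      = (U : Matrix n n ℂ) * (D * E) * star (U : Matrix n n ℂ) := by
  have h : star (U : Matrix n n ℂ) * (U : Matrix n n ℂ) = 1 := Unitary.star_mul_self_of_mem U.2
  simp only [Matrix.mul_assoc]
  rw [← Matrix.mul_assoc (star (U : Matrix n n ℂ)), h, Matrix.one_mul]

lemma star_real_diag (ν : n → ℝ) :
    (Matrix.diagonal (fun i => (ν i : ℂ)))ᴴ = Matrix.diagonal (fun i => (ν i : ℂ)) := by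
  ext i j
  rw [Matrix.conjTranspose_apply]
  by_cases h : i = j
  · subst h; simp [Complex.conj_ofReal]
  · rw [Matrix.diagonal_apply_ne _ h, Matrix.diagonal_apply_ne _ (Ne.symm h), star_zero]

lemma traceNorm_conj_diag (U : Matrix.unitaryGroup n ℂ) (ν : n → ℝ) :
    traceNorm ((U : Matrix n n ℂ) * Matrix.diagonal (fun i => (ν i : ℂ)) *
      star (U : Matrix n n ℂ)) = ∑ i, |ν i| := by
  set Uc : Matrix n n ℂ := (U : Matrix n n ℂ) with hUc
  set A := Uc * Matrix.diagonal (fun i => (ν i : ℂ)) * star Uc with hA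
  set S := Uc * Matrix.diagonal (fun i => ((|ν i| : ℝ) : ℂ)) * star Uc with hS
  have hSpsd : S.PosSemidef := by
    refine Matrix.PosSemidef.mul_mul_conjTranspose_same ?_ Uc
    exact Matrix.posSemidef_diagonal_iff.mpr fun i => by
      simpa using Complex.ofReal_nonneg.mpr (abs_nonneg (ν i))
  have hAH : Aᴴ = A := by
    rw [hA]
    simp only [Matrix.conjTranspose_mul, Matrix.star_eq_conjTranspose,
      Matrix.conjTranspose_conjTranspose, star_real_diag, Matrix.mul_assoc]
  have habs : (fun i => ((|ν i| : ℝ) : ℂ) * ((|ν i| : ℝ) : ℂ))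
      = fun i => ((ν i : ℝ) : ℂ) * ((ν i : ℝ) : ℂ) := by
    funext i
    norm_cast
    rw [abs_mul_abs_self]
  have hsq : S ^ 2 = Aᴴ * A := by
    rw [hAH, pow_two, hS, hA, conj_mul_conj, conj_mul_conj, Matrix.diagonal_mul_diagonal,
      Matrix.diagonal_mul_diagonal, habs]
  have hsqrt : S = ((Matrix.posSemidef_conjTranspose_mul_self A).1.eigenvectorUnitary :
      Matrix n n ℂ) * diagonal (((↑) : ℝ → ℂ) ∘ (√·) ∘
        (Matrix.posSemidef_conjTranspose_mul_self A).1.eigenvalues) *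
      (star (Matrix.posSemidef_conjTranspose_mul_self A).1.eigenvectorUnitary :
        Matrix n n ℂ) := by
    have hB := Matrix.posSemidef_conjTranspose_mul_self A
    have e : ((Matrix.posSemidef_conjTranspose_mul_self A).1.eigenvectorUnitary :
      Matrix n n ℂ) * diagonal (((↑) : ℝ → ℂ) ∘ (√·) ∘
        (Matrix.posSemidef_conjTranspose_mul_self A).1.eigenvalues) *
      (star (Matrix.posSemidef_conjTranspose_mul_self A).1.eigenvectorUnitary :
        Matrix n n ℂ) = cfc Real.sqrt (Aᴴ * A) := by
      rw [hB.1.cfc_eq, Matrix.IsHermitian.cfc, Unitary.conjStarAlgAut_apply]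
      rfl
    rw [e, ← cfcₙ_eq_cfc (hf := Real.continuous_sqrt.continuousOn) (hf0 := Real.sqrt_zero),
      ← CFC.sqrt_eq_real_sqrt _ hB.nonneg, eq_comm,
      CFC.sqrt_eq_iff _ _ hB.nonneg hSpsd.nonneg, ← pow_two, hsq]
  rw [traceNorm, ← hsqrt, hS, trace_conj_unitary, Matrix.trace_diagonal]
  rw [show ∑ i, ((|ν i| : ℝ) : ℂ) = ((∑ i, |ν i| : ℝ) : ℂ) by push_cast; ring]
  exact Complex.ofReal_re _

lemma rayleigh (U : Matrix.unitaryGroup n ℂ) (ν : n → ℝ) (x : n → ℂ) :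
    star x ⬝ᵥ (((U : Matrix n n ℂ) * Matrix.diagonal (fun i => (ν i : ℂ)) *
      star (U : Matrix n n ℂ)) *ᵥ x)
      = ∑ i, (ν i : ℂ) * (Complex.normSq ((star (U : Matrix n n ℂ) *ᵥ x) i) : ℂ) := by
  set Uc : Matrix n n ℂ := (U : Matrix n n ℂ) with hUc
  set c : n → ℂ := star Uc *ᵥ x with hc
  have hstarc : star c = star x ᵥ* Uc := by
    rw [hc, Matrix.star_mulVec, Matrix.star_eq_conjTranspose,
      Matrix.conjTranspose_conjTranspose]
  rw [← Matrix.mulVec_mulVec, ← Matrix.mulVec_mulVec, Matrix.dotProduct_mulVec, ← hstarc, ← hc]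
  rw [dotProduct]
  simp only [Matrix.mulVec_diagonal, Pi.star_apply]
  congr 1
  funext i
  rw [show ((Complex.normSq (c i) : ℝ) : ℂ) = star (c i) * c i from
    Complex.normSq_eq_conj_mul_self (z := c i)]
  ring

lemma coords_norm (U : Matrix.unitaryGroup n ℂ) (x : n → ℂ) :
    star (star (U : Matrix n n ℂ) *ᵥ x) ⬝ᵥ (star (U : Matrix n n ℂ) *ᵥ x) = star x ⬝ᵥ x := by
  have h2 : (U : Matrix n n ℂ) * star (U : Matrix n n ℂ) = 1 :=
    Unitary.mul_star_self_of_mem U.2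
  rw [Matrix.star_eq_conjTranspose] at h2
  rw [Matrix.star_mulVec, Matrix.star_eq_conjTranspose, Matrix.conjTranspose_conjTranspose,
    Matrix.dotProduct_mulVec, Matrix.vecMul_vecMul, h2, Matrix.vecMul_one]

lemma dot_self_eq_sum_normSq (c : n → ℂ) :
    star c ⬝ᵥ c = ((∑ i, Complex.normSq (c i) : ℝ) : ℂ) := by
  rw [dotProduct]
  push_cast
  congr 1
  funext i
  rw [Pi.star_apply, Complex.normSq_eq_conj_mul_self]
  rfl

lemma sum_normSq_coords (U : Matrix.unitaryGroup n ℂ) (x : n → ℂ)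
    (hx : star x ⬝ᵥ x = 1) :
    ∑ i, Complex.normSq ((star (U : Matrix n n ℂ) *ᵥ x) i) = 1 := by
  have h := coords_norm U x
  rw [hx, dot_self_eq_sum_normSq] at h
  exact_mod_cast h

lemma unit_dot {d : ℕ} (ψ : EuclideanSpace ℂ (Fin d)) (h : ‖ψ‖ = 1) :
    star (fun i => ψ i : Fin d → ℂ) ⬝ᵥ (fun i => ψ i) = (1 : ℂ) := by
  have h1 : (inner ℂ ψ ψ : ℂ) = ((‖ψ‖ : ℂ)) ^ 2 := inner_self_eq_norm_sq_to_K ψ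
  rw [h] at h1
  have h2 := EuclideanSpace.inner_eq_star_dotProduct ψ ψ
  rw [h1] at h2
  rw [dotProduct_comm]
  simpa using h2.symm

end auxiliary

/-- for a density matrix ρ with top eigenvalue λ₁ = ‖ρ‖ > 1/2 and
top unit eigenvector ψ₁, every unit vector ψ satisfies
‖ρ − |ψ⟩⟨ψ|‖₁ ≥ 2(1 − λ₁), with equality iff |ψ⟩⟨ψ| = |ψ₁⟩⟨ψ₁|. -/
theorem closest_rank_one_approximation {d : ℕ} (ρ : Matrix (Fin d) (Fin d) ℂ)
    (hρ : ρ.PosSemidef) (htr : ρ.trace = 1) (hgap : 1 / 2 < maxEig ρ)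
    (ψ₁ : EuclideanSpace ℂ (Fin d)) (hψ₁ : ‖ψ₁‖ = 1)
    (heig : ρ.mulVec (fun i => ψ₁ i) = fun i => (maxEig ρ : ℂ) * ψ₁ i) :
    ∀ ψ : EuclideanSpace ℂ (Fin d), ‖ψ‖ = 1 →
      2 * (1 - maxEig ρ) ≤ traceNorm (ρ - proj ψ) ∧
      (traceNorm (ρ - proj ψ) = 2 * (1 - maxEig ρ) ↔ proj ψ = proj ψ₁) := by
  intro ψ hψ
  classical
  have hH : ρ.IsHermitian := hρ.1
  set Uc : Matrix (Fin d) (Fin d) ℂ := (hH.eigenvectorUnitary : Matrix (Fin d) (Fin d) ℂ)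
    with hUcdef
  set lam := hH.eigenvalues with hlamdef
  have hspec : ρ = Uc * Matrix.diagonal (fun i => (lam i : ℂ)) * star Uc :=
    hH.spectral_theorem
  have hmax : maxEig ρ = ⨆ i, lam i := by simp only [maxEig, dif_pos hH, hlamdef]
  set L := maxEig ρ with hLdef
  have hd : Nonempty (Fin d) := by
    by_contra h
    haveI : IsEmpty (Fin d) := not_nonempty_iff.mp h
    have hz : ψ₁ = 0 := Subsingleton.elim _ _
    rw [hz, norm_zero] at hψ₁
    exact one_ne_zero hψ₁.symm
  have hnn : ∀ i, 0 ≤ lam i := fun i => hρ.eigenvalues_nonneg i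
  have hlamle : ∀ i, lam i ≤ L := fun i =>
    hmax ▸ le_ciSup (Set.Finite.bddAbove (Set.finite_range _)) i
  obtain ⟨i₀, hi₀max⟩ := Finite.exists_max lam
  have hLi₀ : lam i₀ = L := le_antisymm (hlamle i₀) (hmax ▸ ciSup_le hi₀max)
  have htrsum : ∑ i, lam i = 1 := by
    have h1 : ρ.trace = ∑ i, (lam i : ℂ) := by
      conv_lhs => rw [hspec]
      rw [trace_conj_unitary, Matrix.trace_diagonal]
    rw [htr, show ∑ i, (lam i : ℂ) = ((∑ i, lam i : ℝ) : ℂ) by push_cast; ring] at h1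
    exact_mod_cast h1.symm
  have hL1 : L ≤ 1 := by
    rw [← hLi₀, ← htrsum]
    exact Finset.single_le_sum (fun i _ => hnn i) (Finset.mem_univ i₀)
  have huniq : ∀ i, i ≠ i₀ → lam i < L := by
    intro i hi
    rcases lt_or_eq_of_le (hlamle i) with h | h
    · exact h
    · exfalso
      have h2 : lam i + lam i₀ ≤ ∑ j, lam j := by
        have h3 := Finset.sum_le_sum_of_subset_of_nonneg
          (Finset.subset_univ ({i, i₀} : Finset (Fin d))) (fun j _ _ => hnn j)
        rwa [Finset.sum_pair hi] at h3
      rw [htrsum, h, hLi₀] at h2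
      linarith
  have hψdot : star (fun i => ψ i : Fin d → ℂ) ⬝ᵥ (fun i => ψ i) = 1 := unit_dot ψ hψ
  have hψ₁dot : star (fun i => ψ₁ i : Fin d → ℂ) ⬝ᵥ (fun i => ψ₁ i) = 1 := unit_dot ψ₁ hψ₁
  -- key lemma: any unit vector achieving Rayleigh quotient L has projector = top projector
  have hproj : ∀ x : EuclideanSpace ℂ (Fin d),
      star (fun i => x i : Fin d → ℂ) ⬝ᵥ (fun i => x i) = 1 →
      star (fun i => x i : Fin d → ℂ) ⬝ᵥ (ρ *ᵥ fun i => x i) = (L : ℂ) →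
      proj x = Matrix.of fun i j => Uc i i₀ * star (Uc j i₀) := by
    intro x hx hray
    set c : Fin d → ℂ := star Uc *ᵥ (fun i => x i) with hcdef
    set t : Fin d → ℝ := fun i => Complex.normSq (c i) with htdef
    have htnn : ∀ i, 0 ≤ t i := fun i => Complex.normSq_nonneg _
    have htsum : ∑ i, t i = 1 := sum_normSq_coords _ _ hx
    have hray2 : ∑ i, lam i * t i = L := by
      have h1 := rayleigh hH.eigenvectorUnitary lam (fun i => x i)
      rw [← hUcdef, ← hspec, hray] at h1
      have h2 := h1.symm
      rw [show ∑ i, (lam i : ℂ) * ((Complex.normSq (c i) : ℝ) : ℂ)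
          = ((∑ i, lam i * t i : ℝ) : ℂ) by push_cast; rfl] at h2
      exact_mod_cast h2
    have hz : ∀ i ∈ Finset.univ, (L - lam i) * t i = 0 := by
      refine (Finset.sum_eq_zero_iff_of_nonneg
        (fun i _ => mul_nonneg (sub_nonneg.mpr (hlamle i)) (htnn i))).mp ?_
      simp only [sub_mul, Finset.sum_sub_distrib, hray2, ← Finset.mul_sum, htsum,
        mul_one, sub_self]
    have hczero : ∀ i, i ≠ i₀ → c i = 0 := by
      intro i hi
      have h1 := hz i (Finset.mem_univ i)
      have hne : L - lam i ≠ 0 := ne_of_gt (sub_pos.mpr (huniq i hi))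
      have h2 : t i = 0 := by
        rcases mul_eq_zero.mp h1 with h | h
        · exact absurd h hne
        · exact h
      exact Complex.normSq_eq_zero.mp h2
    have hti₀ : t i₀ = 1 := by
      rw [← htsum, Finset.sum_eq_single i₀]
      · intro j _ hj
        rw [htdef]
        simp only
        rw [hczero j hj, Complex.normSq_zero]
      · intro h; exact absurd (Finset.mem_univ i₀) h
    have hxc : (fun i => x i : Fin d → ℂ) = fun i => Uc i i₀ * c i₀ := by
      have h2 : Uc * star Uc = 1 := Unitary.mul_star_self_of_mem hH.eigenvectorUnitary.2
      have h3 : Uc *ᵥ c = fun i => x i := by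
        rw [hcdef, Matrix.mulVec_mulVec, h2, Matrix.one_mulVec]
      rw [← h3]
      funext i
      rw [Matrix.mulVec, dotProduct, Finset.sum_eq_single i₀]
      · intro j _ hj; rw [hczero j hj, mul_zero]
      · intro h; exact absurd (Finset.mem_univ i₀) h
    have hcc : c i₀ * star (c i₀) = 1 := by
      have : star (c i₀) * c i₀ = ((Complex.normSq (c i₀) : ℝ) : ℂ) := by
        rw [Complex.normSq_eq_conj_mul_self]; rfl
      rw [mul_comm, this]
      exact_mod_cast hti₀
    ext i j
    simp only [proj, Matrix.of_apply]
    rw [congrFun hxc i, congrFun hxc j, star_mul']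
    linear_combination (Uc i i₀ * star (Uc j i₀)) * hcc
  have hψ₁ray : star (fun i => ψ₁ i : Fin d → ℂ) ⬝ᵥ (ρ *ᵥ fun i => ψ₁ i) = (L : ℂ) := by
    rw [heig]
    rw [show (fun i => (L : ℂ) * ψ₁ i) = (L : ℂ) • (fun i => ψ₁ i) from rfl,
      dotProduct_smul, hψ₁dot, smul_eq_mul, mul_one]
  have hPH : (proj ψ).IsHermitian := by
    ext i j
    simp only [proj, Matrix.conjTranspose_apply, Matrix.of_apply, star_mul', star_star]
    ring
  have hAH : (ρ - proj ψ).IsHermitian := hH.sub hPH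
  set Vc : Matrix (Fin d) (Fin d) ℂ := (hAH.eigenvectorUnitary : Matrix (Fin d) (Fin d) ℂ)
    with hVcdef
  set μ := hAH.eigenvalues with hmudef
  have hAspec : ρ - proj ψ = Vc * Matrix.diagonal (fun i => (μ i : ℂ)) * star Vc :=
    hAH.spectral_theorem
  have htn : traceNorm (ρ - proj ψ) = ∑ i, |μ i| := by
    rw [hAspec]; exact traceNorm_conj_diag _ _
  have hPtr : (proj ψ).trace = 1 := by
    rw [← hψdot, Matrix.trace, dotProduct]
    congr 1; funext i
    simp only [proj, Matrix.diag_apply, Matrix.of_apply, Pi.star_apply]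
    ring
  have hmusum : ∑ i, μ i = 0 := by
    have h1 : (ρ - proj ψ).trace = ∑ i, (μ i : ℂ) := by
      conv_lhs => rw [hAspec]
      rw [trace_conj_unitary, Matrix.trace_diagonal]
    rw [Matrix.trace_sub, htr, hPtr, sub_self] at h1
    rw [show ∑ i, (μ i : ℂ) = ((∑ i, μ i : ℝ) : ℂ) by push_cast; ring] at h1
    exact_mod_cast h1.symm
  set q : Fin d → ℝ := fun i => Complex.normSq ((star Uc *ᵥ fun k => ψ k) i) with hqdef
  have hqnn : ∀ i, 0 ≤ q i := fun i => Complex.normSq_nonneg _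
  have hqsum : ∑ i, q i = 1 := sum_normSq_coords _ _ hψdot
  set r : ℝ := ∑ i, lam i * q i with hrdef
  have hrray : star (fun i => ψ i : Fin d → ℂ) ⬝ᵥ (ρ *ᵥ fun i => ψ i) = ((r : ℝ) : ℂ) := by
    have h1 := rayleigh hH.eigenvectorUnitary lam (fun i => ψ i)
    rw [← hUcdef, ← hspec] at h1
    rw [h1, hrdef]
    push_cast
    rfl
  have hrle : r ≤ L := by
    have h2 : (∑ i, L * q i) = L := by rw [← Finset.mul_sum, hqsum, mul_one]
    rw [hrdef, ← h2]
    exact Finset.sum_le_sum fun i _ => mul_le_mul_of_nonneg_right (hlamle i) (hqnn i)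
  set s : Fin d → ℝ := fun i => Complex.normSq ((star Vc *ᵥ fun k => ψ k) i) with hsdef
  have hsnn : ∀ i, 0 ≤ s i := fun i => Complex.normSq_nonneg _
  have hssum : ∑ i, s i = 1 := sum_normSq_coords _ _ hψdot
  have hsle1 : ∀ i, s i ≤ 1 := fun i =>
    hssum ▸ Finset.single_le_sum (fun j _ => hsnn j) (Finset.mem_univ i)
  have hmus : ∑ i, μ i * s i = r - 1 := by
    have h1 := rayleigh hAH.eigenvectorUnitary μ (fun i => ψ i)
    rw [← hVcdef, ← hAspec] at h1
    have h3 : (proj ψ *ᵥ fun i => ψ i) = fun i => ψ i := by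
      funext i
      rw [Matrix.mulVec, dotProduct]
      simp only [proj, Matrix.of_apply]
      rw [show ∑ j, ψ i * star (ψ j) * ψ j = ψ i * ∑ j, star (ψ j) * ψ j by
        rw [Finset.mul_sum]; congr 1; funext j; ring]
      rw [show (∑ j, star (ψ j) * ψ j : ℂ) = 1 from hψ₁dot ▸ hψdot, mul_one]
    have h2 : star (fun i => ψ i : Fin d → ℂ) ⬝ᵥ ((ρ - proj ψ) *ᵥ fun i => ψ i)
        = ((r - 1 : ℝ) : ℂ) := by
      rw [Matrix.sub_mulVec, dotProduct_sub, hrray, h3, hψdot]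
      push_cast; ring
    rw [h2] at h1
    rw [show ∑ i, (μ i : ℂ) * ((Complex.normSq ((star Vc *ᵥ fun k => ψ k) i) : ℝ) : ℂ)
        = ((∑ i, μ i * s i : ℝ) : ℂ) by push_cast; rfl] at h1
    exact_mod_cast h1.symm
  have hhalf : ∀ i, (-(μ i)) * s i ≤ (|μ i| - μ i) / 2 := by
    intro i
    rcases le_or_gt (μ i) 0 with h | h
    · rw [abs_of_nonpos h]
      have := mul_le_of_le_one_right (neg_nonneg.mpr h) (hsle1 i)
      linarith
    · have h2 : (-(μ i)) * s i ≤ 0 :=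
        mul_nonpos_of_nonpos_of_nonneg (by linarith) (hsnn i)
      rw [abs_of_pos h]
      linarith
  have hmain : 1 - r ≤ (∑ i, |μ i|) / 2 := by
    have h1 : 1 - r = ∑ i, (-(μ i)) * s i := by
      have : ∑ i, (-(μ i)) * s i = -(∑ i, μ i * s i) := by
        rw [← Finset.sum_neg_distrib]
        congr 1; funext i; ring
      rw [this, hmus]; ring
    rw [h1]
    calc ∑ i, (-(μ i)) * s i ≤ ∑ i, (|μ i| - μ i) / 2 :=
          Finset.sum_le_sum fun i _ => hhalf i
      _ = ((∑ i, |μ i|) - ∑ i, μ i) / 2 := by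
          rw [← Finset.sum_div, Finset.sum_sub_distrib]
      _ = (∑ i, |μ i|) / 2 := by rw [hmusum]; ring
  have hlower : 2 * (1 - L) ≤ traceNorm (ρ - proj ψ) := by
    rw [htn]; nlinarith [hmain, hrle]
  refine ⟨hlower, ?_, ?_⟩
  · intro heq
    have hrL : r = L := by
      rw [htn] at heq
      nlinarith [hmain, hrle]
    have h4 := hproj ψ hψdot (by rw [hrray, hrL])
    rw [h4]
    exact (hproj ψ₁ hψ₁dot hψ₁ray).symm
  · intro heq
    rw [heq]
    have hP1 := hproj ψ₁ hψ₁dot hψ₁ray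
    have hd1 : proj ψ₁ = Uc * Matrix.diagonal
        (fun i => ((if i = i₀ then (1:ℝ) else 0 : ℝ) : ℂ)) * star Uc := by
      rw [hP1]
      ext i j
      rw [Matrix.mul_apply]
      simp only [Matrix.mul_diagonal, Matrix.star_apply, Matrix.of_apply]
      rw [Finset.sum_eq_single i₀]
      · rw [if_pos rfl]; push_cast; ring
      · intro k _ hk; rw [if_neg hk]; push_cast; ring
      · intro h; exact absurd (Finset.mem_univ i₀) h
    have hd2 : ρ - proj ψ₁ = Uc * Matrix.diagonal
        (fun i => ((lam i - if i = i₀ then 1 else 0 : ℝ) : ℂ)) * star Uc := by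
      rw [hspec, hd1, ← Matrix.sub_mul, ← Matrix.mul_sub, Matrix.diagonal_sub]
      congr 2
      funext i; push_cast; ring
    rw [hd2, traceNorm_conj_diag]
    have he1 : ∀ i ∈ Finset.univ.erase i₀, |lam i - if i = i₀ then 1 else 0| = lam i := by
      intro i hi
      rw [if_neg (Finset.ne_of_mem_erase hi), sub_zero, abs_of_nonneg (hnn i)]
    rw [← Finset.add_sum_erase _ _ (Finset.mem_univ i₀), Finset.sum_congr rfl he1,
      Finset.sum_erase_eq_sub (Finset.mem_univ i₀), htrsum, if_pos rfl, hLi₀,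
      abs_of_nonpos (by linarith : L - 1 ≤ 0)]
    have h5 := hLi₀
    simp only [hlamdef] at h5
    rw [h5]
    ring
end

section
/- Let X₁,...,X_N be independent, identically distributed random vectors in ℝ^D with E[Xᵢ] = 0, ‖Xᵢ‖₂ ≤ μ almost surely, and E[‖Xᵢ‖₂²] ≤ σ². Then for any 0 < ε < σ²/μ, the probability that ‖(1/N)·Σᵢ Xᵢ‖₂ ≥ ε is at most exp(−N·ε²/(8σ²) + 1/4). -/
open MeasureTheory ProbabilityTheory BigOperators


lemma vb_exp_le_quad {y : ℝ} (hy : |y| ≤ 1) : Real.exp y ≤ 1 + y + (8/9) * y^2 := by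
  have h := Real.exp_bound hy (by norm_num : 0 < 3)
  have hsum : ∑ m ∈ Finset.range 3, y ^ m / m.factorial = 1 + y + y^2/2 := by
    simp [Finset.sum_range_succ, Nat.factorial]
  rw [hsum] at h
  have h3 : |y|^3 ≤ y^2 := by
    calc |y|^3 = |y| * |y|^2 := by ring
    _ ≤ 1 * |y|^2 := by nlinarith [sq_nonneg y, abs_nonneg y]
    _ = y^2 := by rw [one_mul, sq_abs]
  have := abs_le.mp h
  have h4 : ((3:ℕ).succ : ℝ) / ((3:ℕ).factorial * 3) = 2/9 := by norm_num [Nat.factorial]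
  nlinarith [sq_nonneg y]

lemma vb_sqrt_le {x d c : ℝ} (hx : 0 ≤ x) (hd : 0 ≤ d) (hc : 0 ≤ c) :
    Real.sqrt ((x + d)^2 + c) ≤ Real.sqrt (x^2 + c) + d := by
  have hu : Real.sqrt (x^2 + c) ^ 2 = x^2 + c := Real.sq_sqrt (by positivity)
  have hux : x ≤ Real.sqrt (x^2 + c) := by
    have : Real.sqrt (x^2) ≤ Real.sqrt (x^2 + c) := Real.sqrt_le_sqrt (by linarith)
    rwa [Real.sqrt_sq hx] at this
  have h1 : (x + d)^2 + c ≤ (Real.sqrt (x^2 + c) + d)^2 := by nlinarith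
  calc Real.sqrt ((x + d)^2 + c) ≤ Real.sqrt ((Real.sqrt (x^2 + c) + d)^2) :=
        Real.sqrt_le_sqrt h1
    _ = Real.sqrt (x^2 + c) + d := Real.sqrt_sq (by positivity)

lemma vb_lip {D : ℕ} (a b : EuclideanSpace ℝ (Fin D)) {c : ℝ} (hc : 0 ≤ c) :
    |Real.sqrt (‖a‖^2 + c) - Real.sqrt (‖b‖^2 + c)| ≤ ‖a - b‖ := by
  have key : ∀ u v : EuclideanSpace ℝ (Fin D),
      Real.sqrt (‖u‖^2 + c) ≤ Real.sqrt (‖v‖^2 + c) + ‖u - v‖ := by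
    intro u v
    have h1 : ‖u‖ ≤ ‖v‖ + ‖u - v‖ := by
      calc ‖u‖ = ‖v + (u - v)‖ := by rw [add_sub_cancel]
      _ ≤ ‖v‖ + ‖u - v‖ := norm_add_le _ _
    have h2 : Real.sqrt (‖u‖^2 + c) ≤ Real.sqrt ((‖v‖ + ‖u - v‖)^2 + c) := by
      apply Real.sqrt_le_sqrt
      nlinarith [norm_nonneg u, norm_nonneg v, norm_nonneg (u - v)]
    exact h2.trans (vb_sqrt_le (norm_nonneg v) (norm_nonneg (u - v)) hc)
  rw [abs_sub_le_iff]
  constructor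
  · linarith [key a b]
  · have := key b a
    rw [norm_sub_rev] at this
    linarith

set_option maxHeartbeats 1000000 in
lemma vb_step {D : ℕ} (ν : Measure (EuclideanSpace ℝ (Fin D))) [IsProbabilityMeasure ν]
    {μ σ2 l W : ℝ} (hμ : 0 < μ) (hσ2 : 0 < σ2)
    (hmean : ∫ x, x ∂ν = 0) (hb : ∀ᵐ x ∂ν, ‖x‖ ≤ μ)
    (hv : ∫ x, ‖x‖^2 ∂ν ≤ σ2) (hW : σ2 ≤ W)
    (hl0 : 0 ≤ l) (hlμ : l * μ ≤ 1) (s : EuclideanSpace ℝ (Fin D)) :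
    ∫ x, Real.exp (l * Real.sqrt (‖s + x‖^2 + (W - σ2))) ∂ν ≤
      Real.exp (l * Real.sqrt (‖s‖^2 + W)) * Real.exp (l^2 * σ2) := by
  have hc' : (0:ℝ) ≤ W - σ2 := by linarith
  set c' : ℝ := W - σ2 with hc'def
  set g : EuclideanSpace ℝ (Fin D) → ℝ := fun u => Real.sqrt (‖u‖^2 + c') with hg
  have hgcont : Continuous g := ((continuous_norm.pow 2).add continuous_const).sqrt
  set f1 : EuclideanSpace ℝ (Fin D) → ℝ := fun x => g (s + x) - g s with hf1
  have hgscont : Continuous (fun x : EuclideanSpace ℝ (Fin D) => g (s + x)) :=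
    hgcont.comp (continuous_const.add continuous_id)
  have hf1cont : Continuous f1 := hgscont.sub continuous_const
  have hf1lip : ∀ x, |f1 x| ≤ ‖x‖ := by
    intro x
    have := vb_lip (s + x) s hc'
    rwa [add_sub_cancel_left] at this
  -- integrability facts
  have hintnorm2 : Integrable (fun x : EuclideanSpace ℝ (Fin D) => ‖x‖^2) ν := by
    refine ⟨(continuous_norm.pow 2).aestronglyMeasurable, ?_⟩
    apply HasFiniteIntegral.of_bounded (C := μ^2)
    filter_upwards [hb] with x hx
    rw [Real.norm_eq_abs, abs_of_nonneg (by positivity)]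
    nlinarith [norm_nonneg x]
  have hintid : Integrable (fun x : EuclideanSpace ℝ (Fin D) => x) ν :=
    ⟨continuous_id.aestronglyMeasurable, HasFiniteIntegral.of_bounded hb⟩
  have hintf1 : Integrable f1 ν := by
    refine ⟨hf1cont.aestronglyMeasurable, ?_⟩
    apply HasFiniteIntegral.of_bounded (C := μ)
    filter_upwards [hb] with x hx
    exact (hf1lip x).trans hx
  have hintf1sq : Integrable (fun x => f1 x ^ 2) ν := by
    refine ⟨(hf1cont.pow 2).aestronglyMeasurable, ?_⟩
    apply HasFiniteIntegral.of_bounded (C := μ^2)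
    filter_upwards [hb] with x hx
    have h1 : |f1 x| ≤ μ := (hf1lip x).trans hx
    rw [Real.norm_eq_abs, abs_of_nonneg (by positivity), ← sq_abs]
    exact pow_le_pow_left₀ (abs_nonneg _) h1 2
  have hintexp : Integrable (fun x => Real.exp (l * f1 x)) ν := by
    refine ⟨(Real.continuous_exp.comp (continuous_const.mul hf1cont)).aestronglyMeasurable, ?_⟩
    apply HasFiniteIntegral.of_bounded (C := Real.exp 1)
    filter_upwards [hb] with x hx
    rw [Real.norm_eq_abs, abs_of_nonneg (Real.exp_pos _).le, Real.exp_le_exp]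
    calc l * f1 x ≤ l * ‖x‖ := by nlinarith [hf1lip x, le_abs_self (f1 x)]
    _ ≤ l * μ := by nlinarith
    _ ≤ 1 := hlμ
  -- key1 : mgf bound for f1
  have hf1sq_le : ∫ x, f1 x ^ 2 ∂ν ≤ σ2 := by
    refine le_trans (integral_mono hintf1sq hintnorm2 ?_) hv
    intro x
    show f1 x ^ 2 ≤ ‖x‖ ^ 2
    rw [← sq_abs]
    exact pow_le_pow_left₀ (abs_nonneg _) (hf1lip x) 2
  have key1 : ∫ x, Real.exp (l * f1 x) ∂ν ≤ 1 + l * ∫ x, f1 x ∂ν + (8/9) * l^2 * σ2 := by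
    have hrw : ∀ x, (1 : ℝ) + l * f1 x + (8/9) * (l * f1 x)^2
        = (1 + l * f1 x) + (8/9 * l^2) * f1 x ^ 2 := by intro x; ring
    have i1 : Integrable (fun x => 1 + l * f1 x) ν := (integrable_const 1).add (hintf1.const_mul l)
    have i2 : Integrable (fun x => (8/9 * l^2) * f1 x ^ 2) ν := hintf1sq.const_mul _
    have hmono : ∫ x, Real.exp (l * f1 x) ∂ν ≤
        ∫ x, ((1 + l * f1 x) + (8/9 * l^2) * f1 x ^ 2) ∂ν := by
      apply integral_mono_ae hintexp (i1.add i2)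
      filter_upwards [hb] with x hx
      have h1 : Real.exp (l * f1 x) ≤ 1 + l * f1 x + (8/9) * (l * f1 x)^2 := by
        apply vb_exp_le_quad
        rw [abs_mul, abs_of_nonneg hl0]
        calc l * |f1 x| ≤ l * μ := by nlinarith [hf1lip x, abs_nonneg (f1 x)]
        _ ≤ 1 := hlμ
      calc Real.exp (l * f1 x) ≤ 1 + l * f1 x + (8/9) * (l * f1 x)^2 := h1
      _ = (1 + l * f1 x) + (8/9 * l^2) * f1 x ^ 2 := hrw x
    refine hmono.trans ?_
    rw [integral_add i1 i2, integral_add (integrable_const 1) (hintf1.const_mul l),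
      integral_const, integral_const_mul, integral_const_mul]
    simp only [measure_univ, probReal_univ, ENNReal.toReal_one, smul_eq_mul, mul_one, one_mul]
    nlinarith [sq_nonneg l, hf1sq_le]
  -- expansion of second moment
  have hintinner : Integrable (fun x : EuclideanSpace ℝ (Fin D) => (inner ℝ s x : ℝ)) ν :=
    hintid.const_inner s
  have hintZ : Integrable (fun x : EuclideanSpace ℝ (Fin D) => ‖s + x‖^2) ν := by
    refine ⟨(((continuous_const.add continuous_id).norm).pow 2).aestronglyMeasurable, ?_⟩
    apply HasFiniteIntegral.of_bounded (C := (‖s‖ + μ)^2)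
    filter_upwards [hb] with x hx
    rw [Real.norm_eq_abs, abs_of_nonneg (by positivity)]
    have h1 : ‖s + x‖ ≤ ‖s‖ + μ := (norm_add_le s x).trans (by linarith)
    nlinarith [norm_nonneg (s + x), norm_nonneg s]
  have hexp_norm : ∫ x, ‖s + x‖^2 ∂ν = ‖s‖^2 + ∫ x, ‖x‖^2 ∂ν := by
    have hpt : ∀ x : EuclideanSpace ℝ (Fin D),
        ‖s + x‖^2 = (‖s‖^2 + 2 * (inner ℝ s x : ℝ)) + ‖x‖^2 := by
      intro x
      rw [norm_add_sq_real]
    have i1 : Integrable (fun x : EuclideanSpace ℝ (Fin D) => ‖s‖^2 + 2 * (inner ℝ s x : ℝ)) ν :=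
      (integrable_const _).add (hintinner.const_mul 2)
    simp_rw [hpt]
    rw [integral_add i1 hintnorm2, integral_add (integrable_const _) (hintinner.const_mul 2),
      integral_const, integral_const_mul, integral_inner hintid, hmean, inner_zero_right]
    simp
  -- key2 : Jensen
  have key2 : ∫ x, g (s + x) ∂ν ≤ Real.sqrt (‖s‖^2 + W) := by
    set c : ℝ := ‖s‖^2 + W with hcdef
    have hc : 0 < c := by rw [hcdef]; nlinarith [sq_nonneg ‖s‖]
    have hsc : 0 < Real.sqrt c := Real.sqrt_pos.mpr hc
    have hcs : Real.sqrt c ^ 2 = c := Real.sq_sqrt hc.le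
    have hintg : Integrable (fun x => g (s + x)) ν := by
      refine ⟨hgscont.aestronglyMeasurable, ?_⟩
      apply HasFiniteIntegral.of_bounded (C := Real.sqrt ((‖s‖ + μ)^2 + c'))
      filter_upwards [hb] with x hx
      rw [Real.norm_eq_abs, abs_of_nonneg (Real.sqrt_nonneg _)]
      apply Real.sqrt_le_sqrt
      have h1 : ‖s + x‖ ≤ ‖s‖ + μ := (norm_add_le s x).trans (by linarith)
      nlinarith [norm_nonneg (s + x), norm_nonneg s]
    have hptw : ∀ x : EuclideanSpace ℝ (Fin D),
        g (s + x) ≤ (2 * Real.sqrt c)⁻¹ * (‖s + x‖^2 + (c' + c)) := by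
      intro x
      have hZ : (0:ℝ) ≤ ‖s + x‖^2 + c' := add_nonneg (sq_nonneg _) hc'
      have hgs : g (s + x) ^ 2 = ‖s + x‖^2 + c' := Real.sq_sqrt hZ
      rw [inv_mul_eq_div, le_div_iff₀ (mul_pos two_pos hsc)]
      nlinarith [sq_nonneg (g (s + x) - Real.sqrt c)]
    have i3 : Integrable (fun x : EuclideanSpace ℝ (Fin D)
        => (2 * Real.sqrt c)⁻¹ * (‖s + x‖^2 + (c' + c))) ν :=
      ((hintZ.add (integrable_const _)).const_mul _)
    calc ∫ x, g (s + x) ∂ν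
        ≤ ∫ x, (2 * Real.sqrt c)⁻¹ * (‖s + x‖^2 + (c' + c)) ∂ν := integral_mono hintg i3 hptw
      _ = (2 * Real.sqrt c)⁻¹ * ((∫ x, ‖s + x‖^2 ∂ν) + (c' + c)) := by
          rw [integral_const_mul, integral_add hintZ (integrable_const _), integral_const]
          simp
      _ ≤ (2 * Real.sqrt c)⁻¹ * (c + c) := by
          apply mul_le_mul_of_nonneg_left _ (inv_nonneg.mpr (by linarith))
          rw [hexp_norm]
          simp only [hcdef, hc'def]
          linarith
      _ = Real.sqrt c := by
          have hmul : Real.sqrt c * Real.sqrt c = c := Real.mul_self_sqrt hc.le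
          field_simp
          nlinarith [hmul]
  -- combine
  have hfact : ∀ x : EuclideanSpace ℝ (Fin D),
      Real.exp (l * g (s + x)) = Real.exp (l * g s) * Real.exp (l * f1 x) := by
    intro x
    rw [← Real.exp_add]
    congr 1
    simp only [hf1]
    ring
  have hsum : g s + ∫ x, f1 x ∂ν = ∫ x, g (s + x) ∂ν := by
    have : ∫ x, f1 x ∂ν = (∫ x, g (s + x) ∂ν) - g s := by
      simp only [hf1]
      rw [integral_sub ?hg (integrable_const _), integral_const]
      · simp
      case hg =>
        refine ⟨hgscont.aestronglyMeasurable, ?_⟩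
        apply HasFiniteIntegral.of_bounded (C := Real.sqrt ((‖s‖ + μ)^2 + c'))
        filter_upwards [hb] with x hx
        rw [Real.norm_eq_abs, abs_of_nonneg (Real.sqrt_nonneg _)]
        apply Real.sqrt_le_sqrt
        have h1 : ‖s + x‖ ≤ ‖s‖ + μ := (norm_add_le s x).trans (by linarith)
        nlinarith [norm_nonneg (s + x), norm_nonneg s]
    rw [this]; ring
  calc ∫ x, Real.exp (l * Real.sqrt (‖s + x‖^2 + c')) ∂ν
      = ∫ x, Real.exp (l * g s) * Real.exp (l * f1 x) ∂ν := by
        apply integral_congr_ae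
        filter_upwards with x
        rw [← hfact x]
    _ = Real.exp (l * g s) * ∫ x, Real.exp (l * f1 x) ∂ν := integral_const_mul _ _
    _ ≤ Real.exp (l * g s) * Real.exp (l * ∫ x, f1 x ∂ν + l^2 * σ2) := by
        apply mul_le_mul_of_nonneg_left _ (Real.exp_pos _).le
        refine key1.trans ?_
        nlinarith [sq_nonneg l, Real.add_one_le_exp (l * ∫ x, f1 x ∂ν + l^2 * σ2)]
    _ = Real.exp (l * (g s + ∫ x, f1 x ∂ν) + l^2 * σ2) := by
        rw [← Real.exp_add]
        congr 1
        ring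
    _ ≤ Real.exp (l * Real.sqrt (‖s‖^2 + W) + l^2 * σ2) := by
        apply Real.exp_le_exp.mpr
        rw [hsum]
        nlinarith [key2]
    _ = Real.exp (l * Real.sqrt (‖s‖^2 + W)) * Real.exp (l^2 * σ2) := Real.exp_add _ _

set_option maxHeartbeats 1000000 in
/-- Vector Bernstein inequality: for i.i.d. centered random
vectors X₁,…,X_N in ℝ^D with ‖Xᵢ‖ ≤ μ a.s. and E‖Xᵢ‖² ≤ σ², and any
0 < ε < σ²/μ, ℙ(‖(1/N)∑ᵢXᵢ‖ ≥ ε) ≤ exp(−Nε²/(8σ²) + 1/4). -/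
theorem vector_bernstein {Ω : Type*} [MeasurableSpace Ω]
    (P : Measure Ω) [IsProbabilityMeasure P]
    {D N : ℕ} (hN : 0 < N)
    (X : Fin N → Ω → EuclideanSpace ℝ (Fin D))
    (hmeas : ∀ i, Measurable (X i))
    (hindep : iIndepFun X P)
    (hident : ∀ i j, IdentDistrib (X i) (X j) P P)
    (hmean : ∀ i, ∫ ω, X i ω ∂P = 0)
    {μ σ : ℝ} (hμ : 0 < μ)
    (hbound : ∀ i, ∀ᵐ ω ∂P, ‖X i ω‖ ≤ μ)
    (hvar : ∀ i, ∫ ω, ‖X i ω‖ ^ 2 ∂P ≤ σ ^ 2)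
    {ε : ℝ} (hε0 : 0 < ε) (hε : ε < σ ^ 2 / μ) :
    P {ω | ε ≤ ‖(N : ℝ)⁻¹ • ∑ i, X i ω‖} ≤
      ENNReal.ofReal (Real.exp (-(N * ε ^ 2) / (8 * σ ^ 2) + 1 / 4)) := by
  classical
  have hεμ : ε * μ < σ ^ 2 := (lt_div_iff₀ hμ).mp hε
  have hσ2 : 0 < σ ^ 2 := by nlinarith
  set σ2 : ℝ := σ ^ 2 with hσ2def
  have hN1 : (1:ℝ) ≤ (N:ℝ) := by exact_mod_cast hN
  -- partial sums
  set S : ℕ → Ω → EuclideanSpace ℝ (Fin D) :=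
    fun k ω => ∑ i ∈ Finset.univ.filter (fun i : Fin N => (i:ℕ) < k), X i ω with hSdef
  have hSmeas : ∀ k, Measurable (S k) := by
    intro k
    exact Finset.measurable_sum _ (fun i _ => hmeas i)
  have hball : ∀ᵐ ω ∂P, ∀ i, ‖X i ω‖ ≤ μ := ae_all_iff.mpr hbound
  have hSbound : ∀ k, ∀ᵐ ω ∂P, ‖S k ω‖ ≤ (N:ℝ) * μ := by
    intro k
    filter_upwards [hball] with ω hω
    calc ‖S k ω‖ ≤ ∑ i ∈ Finset.univ.filter (fun i : Fin N => (i:ℕ) < k), ‖X i ω‖ :=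
          norm_sum_le _ _
    _ ≤ ∑ _i ∈ Finset.univ.filter (fun i : Fin N => (i:ℕ) < k), μ :=
          Finset.sum_le_sum (fun i _ => hω i)
    _ = ((Finset.univ.filter (fun i : Fin N => (i:ℕ) < k)).card : ℝ) * μ := by
          rw [Finset.sum_const, nsmul_eq_mul]
    _ ≤ (N:ℝ) * μ := by
          apply mul_le_mul_of_nonneg_right _ hμ.le
          have h1 : (Finset.univ.filter (fun i : Fin N => (i:ℕ) < k)).card ≤ N := by
            calc _ ≤ Finset.univ.card := Finset.card_filter_le _ _
            _ = N := by simp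
          exact_mod_cast h1
  -- the key mgf induction
  have key : ∀ l : ℝ, 0 ≤ l → l * μ ≤ 1 → ∀ k, k ≤ N →
      ∫ ω, Real.exp (l * Real.sqrt (‖S k ω‖^2 + ((N:ℝ) - k) * σ2)) ∂P ≤
        Real.exp (l * Real.sqrt ((N:ℝ) * σ2)) * Real.exp (k * (l^2 * σ2)) := by
    intro l hl0 hlμ k
    induction k with
    | zero =>
      intro _
      have hS0 : ∀ ω, S 0 ω = 0 := by
        intro ω
        rw [hSdef]
        simp
      have hconst : (fun ω => Real.exp (l * Real.sqrt (‖S 0 ω‖^2 + ((N:ℝ) - ((0:ℕ):ℝ)) * σ2)))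
          = fun _ => Real.exp (l * Real.sqrt ((N:ℝ) * σ2)) := by
        funext ω
        rw [hS0 ω]
        norm_num
      rw [hconst, integral_const]
      simp
    | succ k ih =>
      intro hk1
      have hk : k < N := hk1
      have hkN : k ≤ N := hk.le
      set j : Fin N := ⟨k, hk⟩ with hjdef
      have hins : Finset.univ.filter (fun i : Fin N => (i:ℕ) < k+1)
          = insert j (Finset.univ.filter (fun i : Fin N => (i:ℕ) < k)) := by
        ext i
        simp only [Finset.mem_filter, Finset.mem_univ, true_and, Finset.mem_insert]
        constructor
        · intro h
          rcases Nat.lt_succ_iff_lt_or_eq.mp h with h | h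
          · exact Or.inr h
          · exact Or.inl (Fin.ext h)
        · rintro (h | h)
          · rw [h]; exact Nat.lt_succ_self k
          · exact h.trans (Nat.lt_succ_self k)
      have hnotmem : j ∉ Finset.univ.filter (fun i : Fin N => (i:ℕ) < k) := by simp [hjdef]
      have hsplit : ∀ ω, S (k+1) ω = S k ω + X j ω := by
        intro ω
        rw [hSdef]
        simp only
        rw [hins, Finset.sum_insert hnotmem, add_comm]
      -- independence
      have hsum_eq : (∑ i ∈ Finset.univ.filter (fun i : Fin N => (i:ℕ) < k), X i) = S k := by
        funext ω
        rw [hSdef]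
        simp [Finset.sum_apply]
      have hind : IndepFun (S k) (X j) P := by
        have := hindep.indepFun_finsetSum_of_notMem hmeas hnotmem
        rwa [hsum_eq] at this
      have hmap : P.map (fun ω => (S k ω, X j ω)) = (P.map (S k)).prod (P.map (X j)) :=
        (ProbabilityTheory.indepFun_iff_map_prod_eq_prod_map_map
          (hSmeas k).aemeasurable (hmeas j).aemeasurable).mp hind
      set νU := P.map (S k) with hνU
      set νX := P.map (X j) with hνX
      haveI : IsProbabilityMeasure νU := Measure.isProbabilityMeasure_map (hSmeas k).aemeasurable
      haveI : IsProbabilityMeasure νX := Measure.isProbabilityMeasure_map (hmeas j).aemeasurable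
      -- transferred hypotheses
      have hmeanX : ∫ x, x ∂νX = 0 := by
        rw [hνX, integral_map (f := fun x => x) (hmeas j).aemeasurable aestronglyMeasurable_id]
        exact hmean j
      have hbX : ∀ᵐ x ∂νX, ‖x‖ ≤ μ := by
        rw [hνX]
        exact (ae_map_iff (hmeas j).aemeasurable
          (measurableSet_le measurable_norm measurable_const)).mpr (hbound j)
      have hvX : ∫ x, ‖x‖^2 ∂νX ≤ σ2 := by
        rw [hνX, integral_map (f := fun x => ‖x‖^2) (hmeas j).aemeasurable (continuous_norm.pow 2).aestronglyMeasurable]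
        exact hvar j
      have hUb : ∀ᵐ u ∂νU, ‖u‖ ≤ (N:ℝ) * μ := by
        rw [hνU]
        exact (ae_map_iff (hSmeas k).aemeasurable
          (measurableSet_le measurable_norm measurable_const)).mpr (hSbound k)
      -- constants
      set W : ℝ := ((N:ℝ) - k) * σ2 with hWdef
      have hWσ : σ2 ≤ W := by
        have : (k:ℝ) + 1 ≤ (N:ℝ) := by exact_mod_cast hk1
        nlinarith
      have hW'eq : ((N:ℝ) - (k+1:ℕ)) * σ2 = W - σ2 := by
        push_cast
        ring
      have hW'0 : 0 ≤ W - σ2 := by linarith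
      set F : EuclideanSpace ℝ (Fin D) × EuclideanSpace ℝ (Fin D) → ℝ :=
        fun p => Real.exp (l * Real.sqrt (‖p.1 + p.2‖^2 + (W - σ2))) with hF
      have hFcont : Continuous F := by
        apply Real.continuous_exp.comp
        apply Continuous.mul continuous_const
        exact (((continuous_fst.add continuous_snd).norm.pow 2).add continuous_const).sqrt
      -- integrability of F over the product
      have hfstae : ∀ᵐ p ∂(νU.prod νX), ‖p.1‖ ≤ (N:ℝ) * μ := by
        have h1 : (νU.prod νX).map Prod.fst = νU := by
          rw [Measure.map_fst_prod]
          simp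
        exact ae_of_ae_map (p := fun u => ‖u‖ ≤ (N:ℝ) * μ)
          (measurable_fst.aemeasurable (μ := νU.prod νX)) (by rw [h1]; exact hUb)
      have hsndae : ∀ᵐ p ∂(νU.prod νX), ‖p.2‖ ≤ μ := by
        have h1 : (νU.prod νX).map Prod.snd = νX := by
          rw [Measure.map_snd_prod]
          simp
        exact ae_of_ae_map (p := fun u => ‖u‖ ≤ μ)
          (measurable_snd.aemeasurable (μ := νU.prod νX)) (by rw [h1]; exact hbX)
      have hFint : Integrable F (νU.prod νX) := by
        refine ⟨hFcont.aestronglyMeasurable, ?_⟩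
        apply HasFiniteIntegral.of_bounded
          (C := Real.exp (l * Real.sqrt (((N:ℝ)*μ + μ)^2 + (W - σ2))))
        filter_upwards [hfstae, hsndae] with p h1 h2
        rw [Real.norm_eq_abs, abs_of_nonneg (Real.exp_pos _).le, Real.exp_le_exp]
        apply mul_le_mul_of_nonneg_left _ hl0
        apply Real.sqrt_le_sqrt
        have h3 : ‖p.1 + p.2‖ ≤ (N:ℝ)*μ + μ := (norm_add_le _ _).trans (by linarith)
        nlinarith [norm_nonneg (p.1 + p.2)]
      -- the chain
      have hGcont : Continuous (fun u : EuclideanSpace ℝ (Fin D) =>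
          Real.exp (l * Real.sqrt (‖u‖^2 + W))) := by
        apply Real.continuous_exp.comp
        exact Continuous.mul continuous_const ((continuous_norm.pow 2).add continuous_const).sqrt
      have hGint : Integrable (fun u => Real.exp (l * Real.sqrt (‖u‖^2 + W))
          * Real.exp (l^2 * σ2)) νU := by
        refine ⟨(hGcont.mul continuous_const).aestronglyMeasurable, ?_⟩
        apply HasFiniteIntegral.of_bounded
          (C := Real.exp (l * Real.sqrt (((N:ℝ)*μ)^2 + W)) * Real.exp (l^2 * σ2))
        filter_upwards [hUb] with u hu
        rw [Real.norm_eq_abs, abs_of_nonneg (by positivity)]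
        apply mul_le_mul_of_nonneg_right _ (Real.exp_pos _).le
        rw [Real.exp_le_exp]
        apply mul_le_mul_of_nonneg_left _ hl0
        apply Real.sqrt_le_sqrt
        nlinarith [norm_nonneg u]
      calc ∫ ω, Real.exp (l * Real.sqrt (‖S (k+1) ω‖^2 + ((N:ℝ) - (k+1:ℕ)) * σ2)) ∂P
          = ∫ ω, F (S k ω, X j ω) ∂P := by
            apply integral_congr_ae
            filter_upwards with ω
            rw [hF]
            simp only
            rw [hsplit ω, hW'eq]
        _ = ∫ p, F p ∂(P.map (fun ω => (S k ω, X j ω))) :=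
            (integral_map ((hSmeas k).prodMk (hmeas j)).aemeasurable
              hFcont.aestronglyMeasurable).symm
        _ = ∫ p, F p ∂(νU.prod νX) := by rw [hmap]
        _ = ∫ u, ∫ x, F (u, x) ∂νX ∂νU := integral_prod F hFint
        _ ≤ ∫ u, Real.exp (l * Real.sqrt (‖u‖^2 + W)) * Real.exp (l^2 * σ2) ∂νU := by
            apply integral_mono hFint.integral_prod_left hGint
            intro u
            exact vb_step νX hμ hσ2 hmeanX hbX hvX hWσ hl0 hlμ u
        _ = (∫ u, Real.exp (l * Real.sqrt (‖u‖^2 + W)) ∂νU) * Real.exp (l^2 * σ2) :=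
            integral_mul_const _ _
        _ = (∫ ω, Real.exp (l * Real.sqrt (‖S k ω‖^2 + W)) ∂P) * Real.exp (l^2 * σ2) := by
            rw [hνU, integral_map (hSmeas k).aemeasurable hGcont.aestronglyMeasurable]
        _ ≤ (Real.exp (l * Real.sqrt ((N:ℝ) * σ2)) * Real.exp (k * (l^2 * σ2)))
              * Real.exp (l^2 * σ2) := by
            apply mul_le_mul_of_nonneg_right _ (Real.exp_pos _).le
            exact ih hkN
        _ = Real.exp (l * Real.sqrt ((N:ℝ) * σ2)) * Real.exp ((k+1:ℕ) * (l^2 * σ2)) := by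
            rw [mul_assoc, ← Real.exp_add]
            congr 2
            push_cast
            ring
  -- specialize to k = N
  have hSN : ∀ ω, S N ω = ∑ i, X i ω := by
    intro ω
    rw [hSdef]
    simp only
    congr 1
    ext i
    simp [i.isLt]
  have keyN : ∀ l : ℝ, 0 ≤ l → l * μ ≤ 1 →
      ∫ ω, Real.exp (l * ‖∑ i, X i ω‖) ∂P ≤
        Real.exp (l * Real.sqrt ((N:ℝ) * σ2) + N * (l^2 * σ2)) := by
    intro l hl0 hlμ
    have h1 := key l hl0 hlμ N le_rfl
    have h2 : (fun ω => Real.exp (l * Real.sqrt (‖S N ω‖^2 + ((N:ℝ) - (N:ℕ)) * σ2)))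
        = fun ω => Real.exp (l * ‖∑ i, X i ω‖) := by
      funext ω
      rw [hSN ω, sub_self, zero_mul, add_zero, Real.sqrt_sq (norm_nonneg _)]
    rw [h2] at h1
    rw [Real.exp_add]
    exact h1
  -- Markov step, for any admissible l
  have markov : ∀ l : ℝ, 0 ≤ l → l * μ ≤ 1 →
      P {ω | ε ≤ ‖(N : ℝ)⁻¹ • ∑ i, X i ω‖} ≤
        ENNReal.ofReal (Real.exp (l * Real.sqrt ((N:ℝ) * σ2) + N * (l^2 * σ2) - l * ((N:ℝ) * ε))) := by
    intro l hl0 hlμ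
    set f : Ω → ℝ := fun ω => Real.exp (l * ‖∑ i, X i ω‖) with hfdef
    have hfmeas : Measurable f := by
      apply (Real.continuous_exp.measurable).comp
      apply Measurable.const_mul
      exact (Finset.measurable_sum _ (fun i _ => hmeas i)).norm
    have hfint : Integrable f P := by
      refine ⟨hfmeas.aestronglyMeasurable, ?_⟩
      apply HasFiniteIntegral.of_bounded (C := Real.exp (l * ((N:ℝ) * μ)))
      filter_upwards [hSbound N] with ω hω
      rw [Real.norm_eq_abs, abs_of_nonneg (Real.exp_pos _).le, Real.exp_le_exp, ← hSN ω]
      exact mul_le_mul_of_nonneg_left hω hl0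
    have hsubset : {ω | ε ≤ ‖(N : ℝ)⁻¹ • ∑ i, X i ω‖} ⊆
        {ω | Real.exp (l * ((N:ℝ) * ε)) ≤ f ω} := by
      intro ω hω
      simp only [Set.mem_setOf_eq] at hω ⊢
      rw [Real.exp_le_exp]
      have hnorm : ‖(N : ℝ)⁻¹ • ∑ i, X i ω‖ = (N:ℝ)⁻¹ * ‖∑ i, X i ω‖ := by
        rw [norm_smul, Real.norm_eq_abs, abs_of_nonneg (by positivity)]
      rw [hnorm] at hω
      have hNpos : (0:ℝ) < N := by exact_mod_cast hN
      have h3 : (N:ℝ) * ε ≤ ‖∑ i, X i ω‖ := by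
        rw [← mul_le_mul_iff_right₀ hNpos] at hω
        calc (N:ℝ) * ε ≤ (N:ℝ) * ((N:ℝ)⁻¹ * ‖∑ i, X i ω‖) := hω
        _ = ‖∑ i, X i ω‖ := by field_simp
      exact mul_le_mul_of_nonneg_left h3 hl0
    have hm := mul_meas_ge_le_integral_of_nonneg
      (ae_of_all P (fun ω => (Real.exp_pos _).le)) hfint (Real.exp (l * ((N:ℝ) * ε)))
    have hPA : (P {ω | ε ≤ ‖(N : ℝ)⁻¹ • ∑ i, X i ω‖}).toReal ≤
        Real.exp (l * Real.sqrt ((N:ℝ) * σ2) + N * (l^2 * σ2) - l * ((N:ℝ) * ε)) := by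
      have h4 : (P {ω | ε ≤ ‖(N : ℝ)⁻¹ • ∑ i, X i ω‖}).toReal ≤
          (P {ω | Real.exp (l * ((N:ℝ) * ε)) ≤ f ω}).toReal :=
        ENNReal.toReal_mono (measure_ne_top P _) (measure_mono hsubset)
      have h5 : Real.exp (l * ((N:ℝ) * ε)) * (P {ω | Real.exp (l * ((N:ℝ) * ε)) ≤ f ω}).toReal ≤
          Real.exp (l * Real.sqrt ((N:ℝ) * σ2) + N * (l^2 * σ2)) :=
        hm.trans (keyN l hl0 hlμ)
      have h6 : (P {ω | Real.exp (l * ((N:ℝ) * ε)) ≤ f ω}).toReal ≤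
          Real.exp (l * Real.sqrt ((N:ℝ) * σ2) + N * (l^2 * σ2)) / Real.exp (l * ((N:ℝ) * ε)) := by
        rw [le_div_iff₀ (Real.exp_pos _)]
        linarith [h5]
      rw [← Real.exp_sub] at h6
      linarith
    calc P {ω | ε ≤ ‖(N : ℝ)⁻¹ • ∑ i, X i ω‖}
        = ENNReal.ofReal ((P {ω | ε ≤ ‖(N : ℝ)⁻¹ • ∑ i, X i ω‖}).toReal) :=
          (ENNReal.ofReal_toReal (measure_ne_top P _)).symm
      _ ≤ ENNReal.ofReal (Real.exp (l * Real.sqrt ((N:ℝ) * σ2) + N * (l^2 * σ2) - l * ((N:ℝ) * ε))) :=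
          ENNReal.ofReal_le_ofReal hPA
  -- case split
  by_cases hcase : (N:ℝ) * ε^2 ≤ 2 * σ2
  · -- trivial case: the bound exceeds 1
    have h1 : (N:ℝ) * ε^2 / (8 * σ2) ≤ 1/4 := by
      rw [div_le_iff₀ (by positivity)]
      nlinarith
    have h2 : (0:ℝ) ≤ -((N:ℝ) * ε^2) / (8 * σ2) + 1/4 := by
      rw [neg_div]
      linarith
    calc P {ω | ε ≤ ‖(N : ℝ)⁻¹ • ∑ i, X i ω‖} ≤ 1 := prob_le_one
      _ ≤ ENNReal.ofReal (Real.exp (-((N:ℝ) * ε ^ 2) / (8 * σ2) + 1 / 4)) := by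
          rw [← ENNReal.ofReal_one]
          exact ENNReal.ofReal_le_ofReal (Real.one_le_exp h2)
  · -- main case
    push_neg at hcase
    set q : ℝ := Real.sqrt ((N:ℝ) * σ2) with hqdef
    have hq0 : 0 ≤ q := Real.sqrt_nonneg _
    have hq2 : q^2 = (N:ℝ) * σ2 := Real.sq_sqrt (by positivity)
    have hNpos : (0:ℝ) < N := by exact_mod_cast hN
    have hqlt : q < (N:ℝ) * ε := by
      by_contra hcon
      push_neg at hcon
      have h1 : ((N:ℝ) * ε)^2 ≤ q^2 := by nlinarith [mul_pos hNpos hε0]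
      rw [hq2] at h1
      nlinarith [mul_lt_mul_of_pos_left hcase hNpos, mul_pos hNpos hσ2]
    set l : ℝ := ((N:ℝ) * ε - q) / (2 * ((N:ℝ) * σ2)) with hldef
    have hl0 : 0 ≤ l := by
      apply div_nonneg (by linarith) (by positivity)
    have hlμ : l * μ ≤ 1 := by
      rw [hldef, div_mul_eq_mul_div, div_le_one (by positivity)]
      nlinarith [hq0, hεμ, hμ, hε0]
    have heq : l * q + (N:ℝ) * (l^2 * σ2) - l * ((N:ℝ) * ε)
        = -(((N:ℝ) * ε - q)^2) / (4 * ((N:ℝ) * σ2)) := by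
      rw [hldef]
      field_simp
      ring
    have hineq : -(((N:ℝ) * ε - q)^2) / (4 * ((N:ℝ) * σ2)) ≤ -((N:ℝ) * ε^2) / (8 * σ2) + 1/4 := by
      rw [div_le_iff₀ (by positivity : (0:ℝ) < 4 * ((N:ℝ) * σ2))]
      have e : (-((N:ℝ) * ε^2) / (8 * σ2) + 1/4) * (4 * ((N:ℝ) * σ2))
          = -((N:ℝ)^2 * ε^2) / 2 + (N:ℝ) * σ2 := by
        field_simp
        ring
      rw [e]
      nlinarith [sq_nonneg ((N:ℝ) * ε - 2 * q), hq2]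
    calc P {ω | ε ≤ ‖(N : ℝ)⁻¹ • ∑ i, X i ω‖}
        ≤ ENNReal.ofReal (Real.exp (l * q + N * (l^2 * σ2) - l * ((N:ℝ) * ε))) :=
          markov l hl0 hlμ
      _ ≤ ENNReal.ofReal (Real.exp (-((N:ℝ) * ε ^ 2) / (8 * σ2) + 1 / 4)) := by
          apply ENNReal.ofReal_le_ofReal
          rw [Real.exp_le_exp, heq]
          exact hineq
end
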